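/- Let T : ℝᵐ → ℝⁿ be an affine map defined over ℚ and let v₀ ∈ ℝᵐ. Then the image under T of the rational envelope of v₀ equals the rational envelope of T(v₀). -/

import Mathlib

open Finset

/-- A subset `W ⊆ ℝᵐ` is a rational affine subspace if it is the solution set of finitely many
affine equations with rational coefficients. -/
def IsRatAffine (m : ℕ) (W : Set (Fin m → ℝ)) : Prop :=
  ∃ (s : ℕ) (q : Fin s → Fin m → ℚ) (c : Fin s → ℚ),
    W = {x : Fin m → ℝ | ∀ j : Fin s, (∑ i, (q j i : ℝ) * x i) = (c j : ℝ)}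

/-- The rational envelope of `v₀ ∈ ℝᵐ`: the intersection of all rational affine subspaces of
`ℝᵐ` containing `v₀` (= the smallest such subspace). -/
def ratEnvelope (m : ℕ) (v₀ : Fin m → ℝ) : Set (Fin m → ℝ) :=
  {x : Fin m → ℝ | ∀ W : Set (Fin m → ℝ), IsRatAffine m W → v₀ ∈ W → x ∈ W}


open Matrix

/-- det ≠ 0 implies mulVec injective at 0. -/
lemma mulVec_eq_zero_of_det_ne_zero {ι : Type*} [Fintype ι] [DecidableEq ι] {F : Type*} [Field F]
    {N : Matrix ι ι F} (h : N.det ≠ 0) {v : ι → F} (hv : N *ᵥ v = 0) : v = 0 := by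
  by_contra hne
  exact h ((Matrix.exists_mulVec_eq_zero_iff).mp ⟨v, hne, hv⟩)

lemma det_map_ne_zero {ι : Type*} [Fintype ι] [DecidableEq ι]
    (N : Matrix ι ι ℚ) (hN : N.det ≠ 0) : (N.map ⇑(Rat.castHom ℝ)).det ≠ 0 := by
  have e : (N.map ⇑(Rat.castHom ℝ)).det = (Rat.castHom ℝ) N.det := by
    rw [← RingHom.mapMatrix_apply, ← RingHom.map_det]
  rw [e]
  simpa using hN

/-- A rational linear system `M u = z` with real right-hand side is solvable over ℝ as soon as
every *rational* vector in the left kernel of `M` annihilates `z`. -/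
lemma rat_system_solvable {ι κ : Type*} [Fintype ι] [Fintype κ] [DecidableEq ι] [DecidableEq κ]
    (M : Matrix ι κ ℚ) (z : ι → ℝ)
    (H : ∀ lam : ι → ℚ, lam ᵥ* M = 0 → ((fun i => (lam i : ℝ)) ⬝ᵥ z) = 0) :
    ∃ u : κ → ℝ, (M.map ((↑) : ℚ → ℝ)) *ᵥ u = z := by
  classical
  set G : Matrix ι ι ℚ := M * Mᵀ with hGdef
  have hGsymm : Gᵀ = G := by rw [hGdef, transpose_mul, transpose_transpose]
  set K : Submodule ℚ (ι → ℚ) := LinearMap.ker G.mulVecLin with hKdef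
  have hKmem : ∀ v, v ∈ K ↔ G *ᵥ v = 0 := by
    intro v; simp [hKdef, LinearMap.mem_ker]
  -- members of K are in the left kernel of M
  have hker : ∀ v ∈ K, Mᵀ *ᵥ v = 0 := by
    intro v hv
    have h0 : G *ᵥ v = 0 := (hKmem v).mp hv
    have : (Mᵀ *ᵥ v) ⬝ᵥ (Mᵀ *ᵥ v) = 0 := by
      have h1 : v ⬝ᵥ (G *ᵥ v) = 0 := by rw [h0, dotProduct_zero]
      calc (Mᵀ *ᵥ v) ⬝ᵥ (Mᵀ *ᵥ v) = (v ᵥ* M) ⬝ᵥ (Mᵀ *ᵥ v) := by rw [mulVec_transpose]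
        _ = v ⬝ᵥ (M *ᵥ (Mᵀ *ᵥ v)) := (dotProduct_mulVec v M _).symm
        _ = v ⬝ᵥ (G *ᵥ v) := by rw [mulVec_mulVec]
        _ = 0 := h1
    exact dotProduct_self_eq_zero.mp this
  set k := Module.finrank ℚ K with hk
  let bK : Module.Basis (Fin k) ℚ K := Module.finBasis ℚ K
  set B : Matrix ι (Fin k) ℚ := Matrix.of (fun i j => (bK j : ι → ℚ) i) with hBdef
  have hMB : Mᵀ * B = 0 := by
    ext i j
    have := congrFun (hker (bK j) (bK j).2) i
    simpa [Matrix.mul_apply, Matrix.mulVec, dotProduct, hBdef] using this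
  have hGB : G * B = 0 := by
    ext i j
    have := congrFun ((hKmem _).mp (bK j).2) i
    simpa [Matrix.mul_apply, Matrix.mulVec, dotProduct, hBdef] using this
  have hBG : Bᵀ * G = 0 := by
    have := congrArg Matrix.transpose hGB
    rwa [transpose_mul, hGsymm, transpose_zero] at this
  have hBM : Bᵀ * M = 0 := by
    have := congrArg Matrix.transpose hMB
    rwa [transpose_mul, transpose_transpose, transpose_zero] at this
  -- B has linearly independent columns
  have hBind : ∀ c : Fin k → ℚ, B *ᵥ c = 0 → c = 0 := by
    intro c hc
    have hli : LinearIndependent ℚ (fun j => (bK j : ι → ℚ)) :=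
      bK.linearIndependent.map' K.subtype K.ker_subtype
    have := Fintype.linearIndependent_iff.mp hli c ?_
    · funext j; exact this j
    · funext i
      have := congrFun hc i
      simpa [hBdef, Matrix.mulVec, dotProduct, mul_comm] using this
  have hBtB : ∀ c : Fin k → ℚ, (Bᵀ * B) *ᵥ c = 0 → c = 0 := by
    intro c hc
    have h2 : (B *ᵥ c) ⬝ᵥ (B *ᵥ c) = 0 := by
      calc (B *ᵥ c) ⬝ᵥ (B *ᵥ c) = ((B *ᵥ c) ᵥ* B) ⬝ᵥ c := dotProduct_mulVec _ B c
        _ = (Bᵀ *ᵥ (B *ᵥ c)) ⬝ᵥ c := by rw [mulVec_transpose]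
        _ = ((Bᵀ * B) *ᵥ c) ⬝ᵥ c := by rw [mulVec_mulVec]
        _ = 0 := by rw [hc, zero_dotProduct]
    exact hBind c (dotProduct_self_eq_zero.mp h2)
  have hBtB_det : (Bᵀ * B).det ≠ 0 := by
    intro h0
    obtain ⟨v, hvne, hv⟩ := (Matrix.exists_mulVec_eq_zero_iff).mpr h0
    exact hvne (hBtB v hv)
  -- the rational matrix G + B Bᵀ is invertible over ℚ
  have hHdet : (G + B * Bᵀ).det ≠ 0 := by
    intro h0
    obtain ⟨v, hvne, hv⟩ := (Matrix.exists_mulVec_eq_zero_iff).mpr h0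
    apply hvne
    have hsplit : (Mᵀ *ᵥ v) ⬝ᵥ (Mᵀ *ᵥ v) + (Bᵀ *ᵥ v) ⬝ᵥ (Bᵀ *ᵥ v) = 0 := by
      have h1 : v ⬝ᵥ ((G + B * Bᵀ) *ᵥ v) = 0 := by rw [hv, dotProduct_zero]
      rw [add_mulVec, dotProduct_add] at h1
      have e1 : v ⬝ᵥ (G *ᵥ v) = (Mᵀ *ᵥ v) ⬝ᵥ (Mᵀ *ᵥ v) := by
        rw [hGdef, ← mulVec_mulVec, dotProduct_mulVec, ← mulVec_transpose]
      have e2 : v ⬝ᵥ ((B * Bᵀ) *ᵥ v) = (Bᵀ *ᵥ v) ⬝ᵥ (Bᵀ *ᵥ v) := by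
        rw [← mulVec_mulVec, dotProduct_mulVec, ← mulVec_transpose]
      rw [e1, e2] at h1; exact h1
    have hnn1 : (0:ℚ) ≤ (Mᵀ *ᵥ v) ⬝ᵥ (Mᵀ *ᵥ v) := by
      simp [dotProduct]
      exact Finset.sum_nonneg fun i _ => mul_self_nonneg _
    have hnn2 : (0:ℚ) ≤ (Bᵀ *ᵥ v) ⬝ᵥ (Bᵀ *ᵥ v) := by
      simp [dotProduct]
      exact Finset.sum_nonneg fun i _ => mul_self_nonneg _
    have h1 : (Mᵀ *ᵥ v) ⬝ᵥ (Mᵀ *ᵥ v) = 0 := le_antisymm (by linarith) hnn1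
    have h2 : (Bᵀ *ᵥ v) ⬝ᵥ (Bᵀ *ᵥ v) = 0 := le_antisymm (by linarith) hnn2
    have hMv : Mᵀ *ᵥ v = 0 := dotProduct_self_eq_zero.mp h1
    have hBv : Bᵀ *ᵥ v = 0 := dotProduct_self_eq_zero.mp h2
    have hvK : v ∈ K := by
      rw [hKmem, hGdef, ← mulVec_mulVec, hMv, mulVec_zero]
    -- v = B *ᵥ (coords of v)
    set c : Fin k → ℚ := fun j => bK.repr ⟨v, hvK⟩ j with hcdef
    have hvB : v = B *ᵥ c := by
      have := bK.sum_repr ⟨v, hvK⟩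
      have hval := congrArg (Subtype.val) this
      funext i
      have := congrFun hval.symm i
      simpa [hBdef, Matrix.mulVec, dotProduct, hcdef, Submodule.coe_sum,
        Finset.sum_apply, mul_comm, -Module.Basis.sum_repr] using this
    have hc0 : c = 0 := by
      apply hBtB
      rw [← mulVec_mulVec, ← hvB, hBv]
    rw [hvB, hc0, mulVec_zero]
  -- move to ℝ
  set φ : ℚ →+* ℝ := Rat.castHom ℝ with hφ
  set Hr : Matrix ι ι ℝ := (G + B * Bᵀ).map φ with hHr
  have hHrdet : Hr.det ≠ 0 := det_map_ne_zero _ hHdet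
  obtain ⟨u0, hHu0⟩ : ∃ u0 : ι → ℝ, Hr *ᵥ u0 = z := by
    refine ⟨Hr⁻¹ *ᵥ z, ?_⟩
    rw [mulVec_mulVec, Matrix.mul_nonsing_inv _ (isUnit_iff_ne_zero.mpr hHrdet), one_mulVec]
  have hBz : (Bᵀ.map ⇑φ) *ᵥ z = 0 := by
    funext j
    have hlk : (fun i => (bK j : ι → ℚ) i) ᵥ* M = 0 := by
      rw [← mulVec_transpose]; exact hker (bK j) (bK j).2
    have := H _ hlk
    simpa [hBdef, Matrix.mulVec, dotProduct, hφ] using this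
  have hBu0 : (Bᵀ.map ⇑φ) *ᵥ u0 = 0 := by
    refine mulVec_eq_zero_of_det_ne_zero (N := (Bᵀ * B).map ⇑φ)
      (det_map_ne_zero _ hBtB_det) ?_
    have hmat : Bᵀ * (G + B * Bᵀ) = (Bᵀ * B) * Bᵀ := by
      rw [Matrix.mul_add, hBG, zero_add, Matrix.mul_assoc]
    calc ((Bᵀ * B).map ⇑φ) *ᵥ ((Bᵀ.map ⇑φ) *ᵥ u0)
        = (Bᵀ.map ⇑φ) *ᵥ (Hr *ᵥ u0) := by
          rw [mulVec_mulVec, mulVec_mulVec, hHr, ← Matrix.map_mul, ← Matrix.map_mul, hmat]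
      _ = 0 := by rw [hHu0]; exact hBz
  refine ⟨(Mᵀ.map ⇑φ) *ᵥ u0, ?_⟩
  have hmat2 : (G + B * Bᵀ).map ⇑φ = M.map ⇑φ * Mᵀ.map ⇑φ + B.map ⇑φ * Bᵀ.map ⇑φ := by
    rw [Matrix.map_add ⇑φ (map_add φ), hGdef, Matrix.map_mul, Matrix.map_mul]
  calc (M.map ⇑φ) *ᵥ ((Mᵀ.map ⇑φ) *ᵥ u0)
      = (M.map ⇑φ) *ᵥ ((Mᵀ.map ⇑φ) *ᵥ u0) + (B.map ⇑φ) *ᵥ ((Bᵀ.map ⇑φ) *ᵥ u0) := by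
        rw [hBu0, mulVec_zero, add_zero]
    _ = Hr *ᵥ u0 := by rw [mulVec_mulVec, mulVec_mulVec, ← add_mulVec, hHr, hmat2]
    _ = z := hHu0

/-- Evaluation of a rational functional at a real point, as a `ℚ`-linear map. -/
noncomputable def ellQ {m : ℕ} (v : Fin m → ℝ) : (Fin m → ℚ) →ₗ[ℚ] ℝ where
  toFun q := ∑ i, (q i : ℝ) * v i
  map_add' a b := by
    simp only [Pi.add_apply, Rat.cast_add, add_mul, Finset.sum_add_distrib]
  map_smul' a q := by
    simp only [Pi.smul_apply, smul_eq_mul, Rat.cast_mul, RingHom.id_apply, Rat.smul_def,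
      Finset.mul_sum, mul_assoc]

lemma ellQ_apply {m : ℕ} (v : Fin m → ℝ) (q : Fin m → ℚ) :
    ellQ v q = ∑ i, (q i : ℝ) * v i := rfl

lemma mem_ratEnvelope_iff {m : ℕ} (v₀ x : Fin m → ℝ) :
    x ∈ ratEnvelope m v₀ ↔
      ∀ (q : Fin m → ℚ) (c : ℚ), (∑ i, (q i : ℝ) * v₀ i) = (c : ℝ) →
        (∑ i, (q i : ℝ) * x i) = (c : ℝ) := by
  constructor
  · intro hx q c hqc
    exact hx {y : Fin m → ℝ | ∀ _j : Fin 1, (∑ i, (q i : ℝ) * y i) = (c : ℝ)}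
      ⟨1, fun _ => q, fun _ => c, rfl⟩ (fun _ => hqc) 0
  · rintro hx W ⟨s, qq, cc, rfl⟩ hv j
    exact hx (qq j) (cc j) (hv j)


/-- a `ℚ`-defined affine map `T x = A x + b` (rational matrix `A`, rational
vector `b`) sends the rational envelope of `v₀` onto the rational envelope of `T v₀`. -/
theorem image_ratEnvelope_eq_ratEnvelope_image (m n : ℕ)
    (A : Fin n → Fin m → ℚ) (b : Fin n → ℚ)
    (T : (Fin m → ℝ) → (Fin n → ℝ))
    (hT : T = fun x => fun j => (∑ i, (A j i : ℝ) * x i) + (b j : ℝ))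
    (v₀ : Fin m → ℝ) :
    T '' ratEnvelope m v₀ = ratEnvelope n (T v₀) := by
  classical
  -- key computation: pairing a rational functional with `T x`
  have key : ∀ (p : Fin n → ℚ) (x : Fin m → ℝ),
      (∑ r, (p r : ℝ) * T x r)
        = (∑ i, ((∑ r, p r * A r i : ℚ) : ℝ) * x i) + ((∑ r, p r * b r : ℚ) : ℝ) := by
    intro p x
    rw [hT]
    push_cast
    simp only [mul_add, Finset.sum_add_distrib, Finset.mul_sum, Finset.sum_mul]
    rw [Finset.sum_comm]
    ring_nf
  apply Set.Subset.antisymm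
  · -- easy direction: `T` maps the envelope into the envelope of `T v₀`
    rintro _ ⟨x, hx, rfl⟩
    rw [mem_ratEnvelope_iff]
    intro p d hpd
    rw [key p v₀] at hpd
    have h1 : (∑ i, ((∑ r, p r * A r i : ℚ) : ℝ) * v₀ i)
        = ((d - ∑ r, p r * b r : ℚ) : ℝ) := by push_cast at hpd ⊢; linarith
    have h2 := (mem_ratEnvelope_iff v₀ x).mp hx _ _ h1
    rw [key p x, h2]
    push_cast
    ring
  · -- hard direction: every point of the envelope of `T v₀` is hit
    intro y hy
    -- the space of rational affine relations satisfied by `v₀`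
    set S : Submodule ℚ (Fin m → ℚ) :=
      Submodule.comap (ellQ v₀) (LinearMap.range (Algebra.linearMap ℚ ℝ)) with hS
    have hSmem : ∀ q : Fin m → ℚ, q ∈ S ↔ ∃ c : ℚ, (∑ i, (q i : ℝ) * v₀ i) = (c : ℝ) := by
      intro q
      simp only [hS, Submodule.mem_comap, LinearMap.mem_range, Algebra.linearMap_apply,
        ellQ_apply]
      constructor
      · rintro ⟨c, hc⟩
        exact ⟨c, by rw [← hc]; exact (eq_ratCast (algebraMap ℚ ℝ) c)⟩
      · rintro ⟨c, hc⟩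
        exact ⟨c, by rw [eq_ratCast (algebraMap ℚ ℝ) c]; exact hc.symm⟩
    set s := Module.finrank ℚ S with hs
    let bS : Module.Basis (Fin s) ℚ S := Module.finBasis ℚ S
    set M : Matrix (Fin n ⊕ Fin s) (Fin m) ℚ :=
      Matrix.of (Sum.elim A (fun j => ((bS j : Fin m → ℚ)))) with hMdef
    set z : (Fin n ⊕ Fin s) → ℝ := Sum.elim (fun r => y r - T v₀ r) 0 with hzdef
    have Hcond : ∀ lam : Fin n ⊕ Fin s → ℚ, lam ᵥ* M = 0 →
        ((fun i => (lam i : ℝ)) ⬝ᵥ z) = 0 := by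
      intro lam hlam
      set p : Fin n → ℚ := fun r => lam (Sum.inl r) with hp
      set μ : Fin s → ℚ := fun j => lam (Sum.inr j) with hμ
      have hqAi : ∀ i, (∑ r, p r * A r i) + ∑ j, μ j * (bS j : Fin m → ℚ) i = 0 := by
        intro i
        have := congrFun hlam i
        simpa [hMdef, Matrix.vecMul, dotProduct, Fintype.sum_sum_type, hp, hμ]
          using this
      have hqAS : (fun i => ∑ r, p r * A r i) ∈ S := by
        have heq : (fun i => ∑ r, p r * A r i)
            = ∑ j, (-μ j) • ((bS j : Fin m → ℚ)) := by
          funext i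
          have := hqAi i
          simp only [Finset.sum_apply, Pi.smul_apply, smul_eq_mul, neg_mul]
          rw [Finset.sum_neg_distrib]
          linarith
        rw [heq]
        exact Submodule.sum_mem S fun j _ => S.smul_mem _ (bS j).2
      obtain ⟨c, hc⟩ := (hSmem _).mp hqAS
      have hTv : ∑ r, (p r : ℝ) * T v₀ r = ((c + ∑ r, p r * b r : ℚ) : ℝ) := by
        rw [key p v₀, hc]; push_cast; ring
      have hyp := (mem_ratEnvelope_iff (T v₀) y).mp hy p _ hTv
      have hzval : (fun i => (lam i : ℝ)) ⬝ᵥ z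
          = ∑ r, (p r : ℝ) * y r - ∑ r, (p r : ℝ) * T v₀ r := by
        rw [hzdef]
        simp [dotProduct, Fintype.sum_sum_type, hp, mul_sub, Finset.sum_sub_distrib]
      rw [hzval, hyp, hTv]
      ring
    obtain ⟨u, hu⟩ := rat_system_solvable M z Hcond
    -- the preimage point
    refine ⟨fun i => v₀ i + u i, ?_, ?_⟩
    · -- it lies in the envelope of v₀
      rw [mem_ratEnvelope_iff]
      intro q c hqc
      have hqS : q ∈ S := (hSmem q).mpr ⟨c, hqc⟩
      have hbasis0 : ∀ j, (∑ i, ((bS j : Fin m → ℚ) i : ℝ) * u i) = 0 := by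
        intro j
        have := congrFun hu (Sum.inr j)
        simpa [hMdef, hzdef, Matrix.mulVec, dotProduct, Matrix.map_apply] using this
      have hcomp : (ellQ u).comp S.subtype = 0 := by
        apply bS.ext
        intro j
        simpa [ellQ_apply] using hbasis0 j
      have hzero : (∑ i, (q i : ℝ) * u i) = 0 := by
        have := LinearMap.congr_fun hcomp ⟨q, hqS⟩
        simpa [ellQ_apply] using this
      have hsplit : (∑ i, (q i : ℝ) * (v₀ i + u i))
          = (∑ i, (q i : ℝ) * v₀ i) + ∑ i, (q i : ℝ) * u i := by
        simp [mul_add, Finset.sum_add_distrib]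
      rw [hsplit, hqc, hzero, add_zero]
    · -- and maps to y
      funext r
      have hur : (∑ i, (A r i : ℝ) * u i) = y r - T v₀ r := by
        have := congrFun hu (Sum.inl r)
        simpa [hMdef, hzdef, Matrix.mulVec, dotProduct, Matrix.map_apply] using this
      have h1 : T (fun i => v₀ i + u i) r
          = (∑ i, (A r i : ℝ) * v₀ i + (b r : ℝ)) + ∑ i, (A r i : ℝ) * u i := by
        rw [hT]
        simp only [mul_add, Finset.sum_add_distrib]
        ring
      have h2 : T v₀ r = ∑ i, (A r i : ℝ) * v₀ i + (b r : ℝ) := by rw [hT]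
      rw [h1, ← h2, hur]
      ring
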